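/- Let r ≥ 2, let ξ ∈ ℂ be a primitive r-th root of unity, and let ζ ∈ ℂ satisfy ζ⁴ = ξ. For each sign ± define F^{SU(2)}_{U^±} := (1/4)·Σ_{n=0}^{4r-1} ζ^{±(n²-1)}·[n]_ζ², and, when r is odd, F^{SO(3)}_{U^±} := (1/4)·Σ_{n=0, n odd}^{4r-1} ξ^{±(n²-1)/4}·[n]_ζ². Then F^{SU(2)}_{U^±} = 0 if and only if ζ has multiplicative order 2r; and when r is odd, F^{SO(3)}_{U^±} ≠ 0 for every choice of ζ. -/

import Mathlib

noncomputable section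

/-- The quantum integer `[n]_ζ = (ζ^{2n} - ζ^{-2n})/(ζ² - ζ^{-2})`. -/
def qInt (ζ : ℂ) (n : ℤ) : ℂ := (ζ ^ (2 * n) - ζ ^ (-(2 * n))) / (ζ ^ (2 : ℤ) - ζ ^ (-2 : ℤ))

/-- `F^{SU(2)}_{U^±} = (1/4) Σ_{n=0}^{4r-1} ζ^{±(n²-1)} [n]_ζ²` (the sign is `ε = ±1`). -/
def FSU2 (r : ℕ) (ζ : ℂ) (ε : ℤ) : ℂ :=
  (1 / 4 : ℂ) * ∑ n ∈ Finset.range (4 * r), ζ ^ (ε * ((n : ℤ) ^ 2 - 1)) * qInt ζ n ^ 2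

/-- `F^{SO(3)}_{U^±} = (1/4) Σ_{n odd, 0 ≤ n < 4r} ξ^{±(n²-1)/4} [n]_ζ²` (for `r` odd, where
`(n²-1)/4 ∈ ℤ` for odd `n`). -/
def FSO3 (r : ℕ) (ξ ζ : ℂ) (ε : ℤ) : ℂ :=
  (1 / 4 : ℂ) * ∑ n ∈ (Finset.range (4 * r)).filter (fun n => Odd n),
    ξ ^ (ε * (((n : ℤ) ^ 2 - 1) / 4)) * qInt ζ n ^ 2

open Finset

namespace Stmt16Aux

lemma sum_shift_one (N : ℕ) (g : ℤ → ℂ) (hg : ∀ n : ℤ, g (n + N) = g n) :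
    ∑ n ∈ range N, g ((n : ℤ) + 1) = ∑ n ∈ range N, g n := by
  have h1 := Finset.sum_range_succ' (fun n : ℕ => g n) N
  have h2 := Finset.sum_range_succ (fun n : ℕ => g n) N
  have h3 : g (N : ℤ) = g 0 := by simpa using hg 0
  have h4 : ∀ i : ℕ, g ((i + 1 : ℕ) : ℤ) = g ((i : ℤ) + 1) := by intro i; push_cast; ring_nf
  simp only [h4] at h1
  rw [h1, h3] at h2
  push_cast at h2 ⊢
  linear_combination h2

lemma sum_shift (N : ℕ) (g : ℤ → ℂ) (hg : ∀ n : ℤ, g (n + N) = g n) (k : ℤ) :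
    ∑ n ∈ range N, g ((n : ℤ) + k) = ∑ n ∈ range N, g n := by
  induction k using Int.induction_on with
  | zero => simp
  | succ k ih =>
      have := sum_shift_one N (fun n => g (n + k)) (fun n => by
        beta_reduce
        rw [show n + (N : ℤ) + k = n + k + N by ring, hg])
      beta_reduce at this
      calc ∑ n ∈ range N, g ((n : ℤ) + (k + 1))
          = ∑ n ∈ range N, g (((n : ℤ) + 1) + k) := by
            apply Finset.sum_congr rfl; intro n _; ring_nf
        _ = ∑ n ∈ range N, g ((n : ℤ) + k) := this
        _ = ∑ n ∈ range N, g n := ih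
  | pred k ih =>
      have := sum_shift_one N (fun n => g (n + (-(k:ℤ) - 1))) (fun n => by
        beta_reduce
        rw [show n + (N : ℤ) + (-(k:ℤ) - 1) = n + (-(k:ℤ)-1) + N by ring, hg])
      beta_reduce at this
      have e1 : ∑ n ∈ range N, g ((n:ℤ) + -(k:ℤ)) = ∑ n ∈ range N, g ((n:ℤ) + (-(k:ℤ)-1)) := by
        rw [← this]; apply Finset.sum_congr rfl; intro n _; ring_nf
      rw [← e1, ih]

lemma geom (N : ℕ) (w : ℂ) (hw : w ^ N = 1) :
    ∑ k ∈ range N, w ^ k = if w = 1 then (N : ℂ) else 0 := by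
  split_ifs with h
  · simp [h]
  · rw [geom_sum_eq h, hw]; simp

variable {ζ : ℂ} {ε : ℤ}

lemma gper (hζ0 : ζ ≠ 0) (N : ℕ) (a b : ℤ)
    (Hper : ∀ t : ℤ, ζ ^ (a * N * t) = 1) :
    ∀ n : ℤ, ζ ^ (ε * (a*(n + N)+b)^2) = ζ ^ (ε * (a*n+b)^2) := by
  intro n
  rw [show ε * (a*(n+(N:ℤ))+b)^2 = ε * (a*n+b)^2 + a*N*(ε*(2*(a*n+b)+a*N)) by ring,
    zpow_add₀ hζ0, Hper, mul_one]

lemma transform (hζ0 : ζ ≠ 0) (hε2 : ε * ε = 1) (N : ℕ) (a b s : ℤ) (has : a * s = 2)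
    (Hper : ∀ t : ℤ, ζ ^ (a * N * t) = 1) :
    ∑ n ∈ range N, ζ ^ (ε * ((a*(n:ℤ)+b)^2 - 1)) *
        (ζ^(2*(a*(n:ℤ)+b)) - ζ^(-(2*(a*(n:ℤ)+b))))^2
      = 2 * ζ^(-ε) * (ζ^(-4*ε) - 1) * ∑ n ∈ range N, ζ ^ (ε * (a*(n:ℤ)+b)^2) := by
  set g : ℤ → ℂ := fun n => ζ ^ (ε * (a*n+b)^2) with hgdef
  have hper : ∀ n : ℤ, g (n + N) = g n := gper hζ0 N a b Hper
  have hzz : ∀ x y : ℤ, ζ ^ x * ζ ^ y = ζ ^ (x + y) := fun x y => (zpow_add₀ hζ0 x y).symm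
  have key : ∀ n : ℤ,
      ζ ^ (ε * ((a*n+b)^2 - 1)) * (ζ^(2*(a*n+b)) - ζ^(-(2*(a*n+b))))^2
      = ζ^(-4*ε-ε) * g (n + ε*s) + ζ^(-4*ε-ε) * g (n + -(ε*s)) - (2 * ζ^(-ε)) * g n := by
    intro n
    set m : ℤ := a*n+b with hm
    have hg1 : g (n + ε*s) = ζ ^ (ε*m^2 + 4*m + 4*ε) := by
      show ζ ^ (ε * (a*(n + ε*s)+b)^2) = _
      congr 1
      have h1 : a*(n + ε*s) + b = m + 2*ε := by rw [hm]; linear_combination ε * has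
      rw [h1]; linear_combination (4*m + 4*ε) * hε2
    have hg2 : g (n + -(ε*s)) = ζ ^ (ε*m^2 - 4*m + 4*ε) := by
      show ζ ^ (ε * (a*(n + -(ε*s))+b)^2) = _
      congr 1
      have h1 : a*(n + -(ε*s)) + b = m - 2*ε := by rw [hm]; linear_combination (-ε) * has
      rw [h1]; linear_combination (-4*m + 4*ε) * hε2
    have hA : (ζ^(2*m) - ζ^(-(2*m)))^2 = ζ^(4*m) - 2 + ζ^(-(4*m)) := by
      have h1 : ζ^(2*m) * ζ^(2*m) = ζ^(4*m) := by rw [hzz]; congr 1; ring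
      have h2 : ζ^(2*m) * ζ^(-(2*m)) = 1 := by
        rw [hzz, show 2*m + -(2*m) = 0 by ring, zpow_zero]
      have h3 : ζ^(-(2*m)) * ζ^(-(2*m)) = ζ^(-(4*m)) := by rw [hzz]; congr 1; ring
      linear_combination h1 - 2*h2 + h3
    have p1 : ζ^(ε*(m^2-1)) * ζ^(4*m) = ζ^(-4*ε-ε) * ζ^(ε*m^2 + 4*m + 4*ε) := by
      rw [hzz, hzz]; congr 1; ring
    have p2 : ζ^(ε*(m^2-1)) * ζ^(-(4*m)) = ζ^(-4*ε-ε) * ζ^(ε*m^2 - 4*m + 4*ε) := by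
      rw [hzz, hzz]; congr 1; ring
    have p3 : ζ^(ε*(m^2-1)) = ζ^(-ε) * ζ^(ε*m^2) := by
      rw [hzz]; congr 1; ring
    rw [hA, hg1, hg2, hgdef]
    simp only [← hm]
    linear_combination p1 + p2 - 2*p3
  calc ∑ n ∈ range N, ζ ^ (ε * ((a*(n:ℤ)+b)^2 - 1)) *
        (ζ^(2*(a*(n:ℤ)+b)) - ζ^(-(2*(a*(n:ℤ)+b))))^2
      = ∑ n ∈ range N, (ζ^(-4*ε-ε) * g ((n:ℤ) + ε*s) + ζ^(-4*ε-ε) * g ((n:ℤ) + -(ε*s))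
          - (2 * ζ^(-ε)) * g (n:ℤ)) := by
        apply Finset.sum_congr rfl; intro n _; exact key n
    _ = ζ^(-4*ε-ε) * (∑ n ∈ range N, g ((n:ℤ) + ε*s)) +
        ζ^(-4*ε-ε) * (∑ n ∈ range N, g ((n:ℤ) + -(ε*s))) -
        (2 * ζ^(-ε)) * (∑ n ∈ range N, g (n:ℤ)) := by
        rw [Finset.sum_sub_distrib, Finset.sum_add_distrib, ← Finset.mul_sum, ← Finset.mul_sum,
          ← Finset.mul_sum]
    _ = ζ^(-4*ε-ε) * (∑ n ∈ range N, g (n:ℤ)) + ζ^(-4*ε-ε) * (∑ n ∈ range N, g (n:ℤ)) -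
        (2 * ζ^(-ε)) * (∑ n ∈ range N, g (n:ℤ)) := by
        rw [sum_shift N g hper (ε*s), sum_shift N g hper (-(ε*s))]
    _ = 2 * ζ^(-ε) * (ζ^(-4*ε) - 1) * ∑ n ∈ range N, g (n:ℤ) := by
        have : ζ^(-4*ε-ε) = ζ^(-4*ε) * ζ^(-ε) := by rw [hzz]; congr 1
        rw [this]; ring


open scoped Classical in
lemma pairing (hζ0 : ζ ≠ 0)
    (hconj : ∀ k : ℤ, (starRingEnd ℂ) (ζ ^ k) = ζ ^ (-k))
    (N : ℕ) (a b : ℤ) (Hper : ∀ t : ℤ, ζ ^ (a * N * t) = 1) :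
    (∑ n ∈ range N, ζ ^ (ε * (a*(n:ℤ)+b)^2)) *
      (starRingEnd ℂ) (∑ n ∈ range N, ζ ^ (ε * (a*(n:ℤ)+b)^2))
    = N * ∑ h ∈ (range N).filter (fun h : ℕ => ζ ^ (2*a^2*ε*(h:ℤ)) = 1),
        ζ ^ (ε*a*(h:ℤ)*(a*(h:ℤ)+2*b)) := by
  set g : ℤ → ℂ := fun n => ζ ^ (ε * (a*n+b)^2) with hgdef
  have hper : ∀ n : ℤ, g (n + N) = g n := gper hζ0 N a b Hper
  have hzz : ∀ x y : ℤ, ζ ^ x * ζ ^ y = ζ ^ (x + y) := fun x y => (zpow_add₀ hζ0 x y).symm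
  calc (∑ n ∈ range N, g (n:ℤ)) * (starRingEnd ℂ) (∑ n ∈ range N, g (n:ℤ))
      = ∑ k ∈ range N, (∑ h ∈ range N, g ((h:ℤ) + k)) * ζ ^ (-(ε * (a*(k:ℤ)+b)^2)) := by
        rw [map_sum, Finset.mul_sum]
        apply Finset.sum_congr rfl; intro k _
        rw [sum_shift N g hper (k:ℤ), hgdef]
        simp only []
        rw [hconj]
    _ = ∑ k ∈ range N, ∑ h ∈ range N,
          ζ ^ (ε*a*(h:ℤ)*(a*(h:ℤ)+2*b)) * (ζ ^ (2*a^2*ε*(h:ℤ))) ^ k := by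
        apply Finset.sum_congr rfl; intro k _
        rw [Finset.sum_mul]
        apply Finset.sum_congr rfl; intro h _
        show ζ ^ (ε * (a*((h:ℤ) + k)+b)^2) * ζ ^ (-(ε * (a*(k:ℤ)+b)^2)) = _
        rw [hzz]
        have e1 : (ζ ^ (2*a^2*ε*(h:ℤ))) ^ k = ζ ^ ((2*a^2*ε*(h:ℤ)) * k) := by
          rw [← zpow_natCast (ζ ^ (2*a^2*ε*(h:ℤ))) k, ← zpow_mul]
        rw [e1, hzz]
        congr 1; ring
    _ = ∑ h ∈ range N, ζ ^ (ε*a*(h:ℤ)*(a*(h:ℤ)+2*b)) * ∑ k ∈ range N, (ζ ^ (2*a^2*ε*(h:ℤ))) ^ k := by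
        rw [Finset.sum_comm]
        apply Finset.sum_congr rfl; intro h _
        rw [Finset.mul_sum]
    _ = ∑ h ∈ range N, ζ ^ (ε*a*(h:ℤ)*(a*(h:ℤ)+2*b)) *
          (if ζ ^ (2*a^2*ε*(h:ℤ)) = 1 then (N:ℂ) else 0) := by
        apply Finset.sum_congr rfl; intro h _
        congr 1
        apply geom
        rw [← zpow_natCast (ζ ^ (2*a^2*ε*(h:ℤ))) N, ← zpow_mul]
        rw [show 2*a^2*ε*(h:ℤ) * N = a*N*(2*a*ε*h) by ring]
        exact Hper _
    _ = N * ∑ h ∈ (range N).filter (fun h : ℕ => ζ ^ (2*a^2*ε*(h:ℤ)) = 1),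
          ζ ^ (ε*a*(h:ℤ)*(a*(h:ℤ)+2*b)) := by
        rw [Finset.sum_filter, Finset.mul_sum]
        apply Finset.sum_congr rfl; intro h _
        split_ifs with hc
        · ring
        · ring

end Stmt16Aux

open Stmt16Aux Finset in
/-- Let `ξ` be a primitive `r`-th root of unity and `ζ⁴ = ξ`. Then `F^{SU(2)}_{U^±} = 0`
iff `ζ` has multiplicative order `2r`; and if `r` is odd then `F^{SO(3)}_{U^±} ≠ 0` for
every choice of `ζ`. -/
theorem stmt_16 (r : ℕ) (hr : 2 ≤ r) (ξ ζ : ℂ) (hξ : IsPrimitiveRoot ξ r)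
    (hζ : ζ ^ 4 = ξ) (ε : ℤ) (hε : ε = 1 ∨ ε = -1) :
    (FSU2 r ζ ε = 0 ↔ orderOf ζ = 2 * r) ∧
    (Odd r → FSO3 r ξ ζ ε ≠ 0) := by
  classical
  have hr0 : 0 < r := by omega
  have hξ1 : ξ ≠ 1 := hξ.ne_one (by omega)
  have hξr : ξ ^ r = 1 := hξ.pow_eq_one
  have hζ0 : ζ ≠ 0 := by
    intro h
    rw [h] at hζ
    rw [← hζ] at hξ1 hξr
    simp [zero_pow, hr0.ne'] at hξr
  have hε2 : ε * ε = 1 := by rcases hε with rfl | rfl <;> norm_num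
  set u : ℂˣ := Units.mk0 ζ hζ0 with hu
  set d := orderOf ζ with hd
  have hud : orderOf u = d := by rw [hd, ← orderOf_units]; rfl
  have hE1 : ∀ k : ℤ, ζ ^ k = 1 ↔ (d:ℤ) ∣ k := by
    intro k
    have h1 : ζ ^ k = ((u ^ k : ℂˣ) : ℂ) := by rw [Units.val_zpow_eq_zpow_val]; rfl
    rw [h1, Units.val_eq_one, ← orderOf_dvd_iff_zpow_eq_one, hud]
  have hone : ∀ k : ℤ, (d:ℤ) ∣ k → ζ ^ k = 1 := fun k hk => (hE1 k).2 hk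
  have hζ4 : ζ ^ (4:ℤ) = ξ := by
    rw [show (4:ℤ) = ((4:ℕ):ℤ) by norm_num, zpow_natCast, hζ]
  have hd4rN : d ∣ 4 * r := by
    apply orderOf_dvd_of_pow_eq_one
    rw [pow_mul, hζ, hξr]
  have hd4r : (d:ℤ) ∣ 4 * (r:ℤ) := by
    have := Int.natCast_dvd_natCast.2 hd4rN
    push_cast at this
    exact this
  have Hper4 : ∀ t : ℤ, ζ ^ ((1:ℤ) * ((4*r : ℕ):ℤ) * t) = 1 := by
    intro t
    apply hone
    refine dvd_trans hd4r ⟨t, by push_cast; ring⟩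
  have Hper2 : ∀ t : ℤ, ζ ^ ((2:ℤ) * ((2*r : ℕ):ℤ) * t) = 1 := by
    intro t
    apply hone
    refine dvd_trans hd4r ⟨t, by push_cast; ring⟩
  -- conjugation
  have hnsq : Complex.normSq ζ = 1 := by
    have h1 : ζ ^ (4*r) = 1 := by rw [pow_mul, hζ, hξr]
    have h2 : (Complex.normSq ζ) ^ (4*r) = 1 := by
      rw [← map_pow, h1, map_one]
    have h3 := Complex.normSq_nonneg ζ
    rcases (pow_eq_one_iff_of_ne_zero (by omega)).1 h2 with h | ⟨h, -⟩
    · exact h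
    · nlinarith
  have hcz : (starRingEnd ℂ) ζ = ζ⁻¹ := by
    apply eq_inv_of_mul_eq_one_left
    rw [mul_comm, Complex.mul_conj, hnsq]
    norm_num
  have hconj : ∀ k : ℤ, (starRingEnd ℂ) (ζ ^ k) = ζ ^ (-k) := by
    intro k
    rw [map_zpow₀, hcz, inv_zpow, ← zpow_neg]
  -- order trichotomy
  have horder : (d = r ∧ Odd r) ∨ (d = 2*r ∧ Odd r) ∨ d = 4*r := by
    have h4 : orderOf (u^4) = d / Nat.gcd d 4 := by rw [orderOf_pow' u (by norm_num), hud]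
    have hu4 : ((u^4 : ℂˣ) : ℂ) = ξ := by
      rw [Units.val_pow_eq_pow_val]
      exact hζ
    have hor : r = d / Nat.gcd d 4 := by
      rw [← h4, ← orderOf_units, hu4]
      exact hξ.eq_orderOf
    set g := Nat.gcd d 4 with hg
    have hg4 : g ∣ 4 := Nat.gcd_dvd_right d 4
    have hgd : g ∣ d := Nat.gcd_dvd_left d 4
    have hdrg : d = r * g := by
      rw [hor, Nat.div_mul_cancel hgd]
    have hg1 : 1 ≤ g := by
      rcases Nat.eq_zero_or_pos g with h | h
      · exfalso; rw [hg] at h; have := Nat.eq_zero_of_gcd_eq_zero_right h; omega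
      · exact h
    have hg4' : g ≤ 4 := Nat.le_of_dvd (by norm_num) hg4
    interval_cases g
    · -- g = 1 : d = r, odd
      left
      constructor
      · omega
      · rw [Nat.odd_iff]
        by_contra h
        have h2 : 2 ∣ r := by omega
        have : 2 ∣ Nat.gcd d 4 := Nat.dvd_gcd (by omega) (by norm_num)
        omega
    · -- g = 2 : d = 2r, odd
      right; left
      constructor
      · omega
      · rw [Nat.odd_iff]
        by_contra h
        have h2 : 2 ∣ r := by omega
        have : 4 ∣ Nat.gcd d 4 := Nat.dvd_gcd (by omega) (by norm_num)
        omega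
    · exfalso; revert hg4; omega
    · right; right; omega
  -- the nonzero constants
  have hD : ζ^(2:ℤ) - ζ^(-2:ℤ) ≠ 0 := by
    intro h0
    have heq : ζ^(2:ℤ) = ζ^(-2:ℤ) := sub_eq_zero.1 h0
    have h4 : ζ^(4:ℤ) = 1 := by
      calc ζ^(4:ℤ) = ζ^(2:ℤ) * ζ^(2:ℤ) := by rw [← zpow_add₀ hζ0]; norm_num
        _ = ζ^(2:ℤ) * ζ^(-2:ℤ) := by rw [← heq]
        _ = 1 := by rw [← zpow_add₀ hζ0]; norm_num
    rw [hζ4] at h4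
    exact hξ1 h4
  have hc1 : 2 * ζ^(-ε) * (ζ^(-4*ε) - 1) ≠ 0 := by
    have h41 : ζ^(-4*ε) ≠ 1 := by
      rcases hε with rfl | rfl
      · rw [show (-4:ℤ)*1 = -(4:ℤ) by norm_num, zpow_neg, hζ4]
        intro h
        exact hξ1 (by rwa [inv_eq_one] at h)
      · rw [show (-4:ℤ)*(-1) = (4:ℤ) by norm_num, hζ4]
        exact hξ1
    exact mul_ne_zero (mul_ne_zero two_ne_zero (zpow_ne_zero _ hζ0)) (sub_ne_zero.2 h41)
  have hdvd2 : ∀ X : ℤ, ((d:ℤ) ∣ 2*ε*X) ↔ ((d:ℤ) ∣ 2*X) := by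
    intro X
    rcases hε with rfl | rfl
    · norm_num
    · rw [show (2:ℤ)*(-1)*X = -(2*X) by ring, dvd_neg]
  have hTr := transform (ζ := ζ) (ε := ε) hζ0 hε2 (4*r) 1 0 2 (by norm_num) Hper4
  simp only [one_mul, add_zero, mul_zero] at hTr
  have hPr := pairing (ζ := ζ) (ε := ε) hζ0 hconj (4*r) 1 0 Hper4
  simp only [one_pow, one_mul, mul_zero, add_zero, mul_one] at hPr
  set G : ℂ := ∑ x ∈ range (4*r), ζ ^ (ε * (x:ℤ) ^ 2) with hG
  set D : ℂ := ζ^(2:ℤ) - ζ^(-2:ℤ) with hDdef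
  have hFT : FSU2 r ζ ε * (4 * D^2) = 2 * ζ^(-ε) * (ζ^(-4*ε) - 1) * G := by
    rw [← hTr]
    simp only [FSU2, qInt]
    rw [← hDdef, Finset.mul_sum, Finset.sum_mul]
    apply Finset.sum_congr rfl
    intro x _
    rw [show (1:ℂ)/4 * (ζ ^ (ε * ((x:ℤ)^2 - 1)) *
        ((ζ^(2*(x:ℤ)) - ζ^(-(2*(x:ℤ))))/D)^2) * (4*D^2)
        = ζ ^ (ε * ((x:ℤ)^2-1)) * (ζ^(2*(x:ℤ)) - ζ^(-(2*(x:ℤ))))^2 * (D^2 / D^2) by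
      rw [div_pow]; ring, div_self (pow_ne_zero 2 hD), mul_one]
  have h4D : (4 : ℂ) * D^2 ≠ 0 := mul_ne_zero (by norm_num) (pow_ne_zero _ hD)
  have keySU : FSU2 r ζ ε = 0 ↔
      (∑ x ∈ Finset.filter (fun h : ℕ => ζ ^ (2 * ε * (h:ℤ)) = 1) (range (4*r)),
        ζ ^ (ε * (x:ℤ) * (x:ℤ))) = 0 := by
    have h4r0 : ((4*r : ℕ) : ℂ) ≠ 0 := Nat.cast_ne_zero.2 (by omega)
    constructor
    · intro h
      have hG0 : G = 0 := by
        have h2 : 2 * ζ^(-ε) * (ζ^(-4*ε) - 1) * G = 0 := by rw [← hFT, h, zero_mul]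
        exact (mul_eq_zero.1 h2).resolve_left hc1
      have h3 : ((4*r:ℕ):ℂ) * ∑ x ∈ Finset.filter (fun h : ℕ => ζ ^ (2 * ε * (h:ℤ)) = 1)
          (range (4*r)), ζ ^ (ε * (x:ℤ) * (x:ℤ)) = 0 := by
        rw [← hPr, hG0, zero_mul]
      exact (mul_eq_zero.1 h3).resolve_left h4r0
    · intro h
      have hGG : G * (starRingEnd ℂ) G = 0 := by rw [hPr, h, mul_zero]
      have hG0 : G = 0 := by
        rcases mul_eq_zero.1 hGG with h' | h'
        · exact h'
        · exact (map_eq_zero _).1 h'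
      have h2 : FSU2 r ζ ε * (4 * D^2) = 0 := by rw [hFT, hG0, mul_zero]
      exact (mul_eq_zero.1 h2).resolve_right h4D
  have h0mem : 0 ∈ Finset.filter (fun h : ℕ => ζ ^ (2 * ε * (h:ℤ)) = 1) (range (4*r)) := by
    rw [mem_filter]
    exact ⟨mem_range.2 (by omega), by norm_num⟩
  constructor
  · -- SU2 part
    rcases horder with ⟨hcase, hodd⟩ | ⟨hcase, hodd⟩ | hcase
    · -- d = r
      have hterm : ∀ x ∈ Finset.filter (fun h : ℕ => ζ ^ (2 * ε * (h:ℤ)) = 1) (range (4*r)),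
          ζ ^ (ε * (x:ℤ) * (x:ℤ)) = (1:ℂ) := by
        intro x hx
        have hpx := (mem_filter.1 hx).2
        have hdd : (d:ℤ) ∣ 2*(x:ℤ) := (hdvd2 (x:ℤ)).1 ((hE1 _).1 hpx)
        have hnat : d ∣ 2*x := by exact_mod_cast hdd
        rw [hcase] at hnat
        have hrx : r ∣ x := (hodd.coprime_two_right).dvd_of_dvd_mul_left hnat
        obtain ⟨c, rfl⟩ := hrx
        apply hone
        rw [hcase]
        exact ⟨ε*c*(r*c), by push_cast; ring⟩
      have hF0 : (∑ x ∈ Finset.filter (fun h : ℕ => ζ ^ (2 * ε * (h:ℤ)) = 1) (range (4*r)),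
          ζ ^ (ε * (x:ℤ) * (x:ℤ))) ≠ 0 := by
        rw [Finset.sum_congr rfl hterm, Finset.sum_const, nsmul_eq_mul, mul_one]
        exact Nat.cast_ne_zero.2 (Finset.card_ne_zero_of_mem h0mem)
      exact iff_of_false (fun h => hF0 (keySU.1 h)) (by omega)
    · -- d = 2r : the zero case
      have hFset : Finset.filter (fun h : ℕ => ζ ^ (2 * ε * (h:ℤ)) = 1) (range (4*r))
          = {0, r, 2*r, 3*r} := by
        ext x
        simp only [mem_filter, mem_range, mem_insert, mem_singleton]
        constructor
        · rintro ⟨hlt, hpx⟩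
          have hdd : (d:ℤ) ∣ 2*(x:ℤ) := (hdvd2 (x:ℤ)).1 ((hE1 _).1 hpx)
          have hnat : d ∣ 2*x := by exact_mod_cast hdd
          rw [hcase] at hnat
          have hrx : r ∣ x := by
            obtain ⟨c, hc⟩ := hnat
            rw [mul_assoc] at hc
            exact ⟨c, Nat.eq_of_mul_eq_mul_left (by norm_num) hc⟩
          obtain ⟨q, rfl⟩ := hrx
          have hq : q < 4 := by
            by_contra hq4
            push_neg at hq4
            have h44 : 4*r ≤ r*q := by
              calc 4*r = r*4 := by ring
                _ ≤ r*q := Nat.mul_le_mul_left r hq4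
            omega
          interval_cases q <;> omega
        · intro hx
          refine ⟨by rcases hx with rfl|rfl|rfl|rfl <;> omega, ?_⟩
          apply hone
          rw [hcase]
          rcases hx with rfl|rfl|rfl|rfl
          · exact ⟨0, by push_cast; ring⟩
          · exact ⟨ε, by push_cast; ring⟩
          · exact ⟨2*ε, by push_cast; ring⟩
          · exact ⟨3*ε, by push_cast; ring⟩
      have hm1 : ζ^((r:ℤ)) = -1 := by
        have hxx : ζ^((r:ℤ)) * ζ^((r:ℤ)) = 1 := by
          rw [← zpow_add₀ hζ0]
          apply hone
          rw [hcase]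
          exact ⟨1, by push_cast; ring⟩
        rcases mul_self_eq_one_iff.1 hxx with h | h
        · exfalso
          have h1 := (hE1 _).1 h
          rw [hcase] at h1
          have h2 : (2*r) ∣ r := by exact_mod_cast h1
          have := Nat.le_of_dvd hr0 h2
          omega
        · exact h
      have t1 : ζ ^ (ε * (r:ℤ) * (r:ℤ)) = -1 := by
        rw [show ε * (r:ℤ) * (r:ℤ) = (r:ℤ) * ((r:ℤ)*ε) by ring, zpow_mul, hm1]
        rcases hε with rfl | rfl
        · rw [mul_one, zpow_natCast]
          exact hodd.neg_one_pow
        · rw [show ((r:ℤ))*(-1) = -(r:ℤ) by ring, zpow_neg, zpow_natCast, hodd.neg_one_pow]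
          norm_num
      have t2 : ζ ^ (ε * ((2*r:ℕ):ℤ) * ((2*r:ℕ):ℤ)) = 1 := by
        apply hone; rw [hcase]; exact ⟨2*ε*r, by push_cast; ring⟩
      have t3 : ζ ^ (ε * ((3*r:ℕ):ℤ) * ((3*r:ℕ):ℤ)) = -1 := by
        have he : ε * ((3*r:ℕ):ℤ) * ((3*r:ℕ):ℤ) = ((2*r:ℕ):ℤ) * (4*ε*r) + ε*(r:ℤ)*(r:ℤ) := by
          push_cast; ring
        rw [he, zpow_add₀ hζ0, t1]
        have h1 : ζ ^ (((2*r:ℕ):ℤ) * (4*ε*r)) = 1 := by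
          apply hone; rw [hcase]; exact ⟨4*ε*r, by push_cast; ring⟩
        rw [h1, one_mul]
      have hzero : (∑ x ∈ Finset.filter (fun h : ℕ => ζ ^ (2 * ε * (h:ℤ)) = 1) (range (4*r)),
          ζ ^ (ε * (x:ℤ) * (x:ℤ))) = 0 := by
        rw [hFset]
        rw [Finset.sum_insert (by simp only [Finset.mem_insert, Finset.mem_singleton]; omega),
          Finset.sum_insert (by simp only [Finset.mem_insert, Finset.mem_singleton]; omega),
          Finset.sum_insert (by simp only [Finset.mem_singleton]; omega),
          Finset.sum_singleton]
        have t0 : ζ ^ (ε * ((0:ℕ):ℤ) * ((0:ℕ):ℤ)) = 1 := by norm_num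
        rw [t0, t1, t2, t3]
        ring
      exact iff_of_true (keySU.2 hzero) (by omega)
    · -- d = 4r
      have hterm : ∀ x ∈ Finset.filter (fun h : ℕ => ζ ^ (2 * ε * (h:ℤ)) = 1) (range (4*r)),
          ζ ^ (ε * (x:ℤ) * (x:ℤ)) = (1:ℂ) := by
        intro x hx
        have hpx := (mem_filter.1 hx).2
        have hdd : (d:ℤ) ∣ 2*(x:ℤ) := (hdvd2 (x:ℤ)).1 ((hE1 _).1 hpx)
        have hnat : d ∣ 2*x := by exact_mod_cast hdd
        rw [hcase] at hnat
        obtain ⟨c, hc⟩ := hnat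
        rw [show 4*r*c = 2*(2*r*c) by ring] at hc
        have hx2 : x = 2*r*c := Nat.eq_of_mul_eq_mul_left (by norm_num) hc
        apply hone
        rw [hcase, hx2]
        exact ⟨ε*r*c*c, by push_cast; ring⟩
      have hF0 : (∑ x ∈ Finset.filter (fun h : ℕ => ζ ^ (2 * ε * (h:ℤ)) = 1) (range (4*r)),
          ζ ^ (ε * (x:ℤ) * (x:ℤ))) ≠ 0 := by
        rw [Finset.sum_congr rfl hterm, Finset.sum_const, nsmul_eq_mul, mul_one]
        exact Nat.cast_ne_zero.2 (Finset.card_ne_zero_of_mem h0mem)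
      exact iff_of_false (fun h => hF0 (keySU.1 h)) (by omega)
  · -- SO3 part
    intro hoddr
    have hfo : (range (4*r)).filter (fun n => Odd n) = (range (2*r)).image (fun j => 2*j+1) := by
      ext n
      simp only [mem_filter, mem_range, mem_image, Nat.odd_iff]
      constructor
      · rintro ⟨h1, h2⟩
        exact ⟨n/2, by omega, by omega⟩
      · rintro ⟨j, hj, rfl⟩
        omega
    have hinj : ∀ a ∈ range (2*r), ∀ b ∈ range (2*r), 2*a+1 = 2*b+1 → a = b := by
      intro a _ b _ h; omega
    have hTr2 := transform (ζ := ζ) (ε := ε) hζ0 hε2 (2*r) 2 1 1 (by norm_num) Hper2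
    have hPr2 := pairing (ζ := ζ) (ε := ε) hζ0 hconj (2*r) 2 1 Hper2
    set G2 : ℂ := ∑ n ∈ range (2*r), ζ ^ (ε * (2*(n:ℤ)+1)^2) with hG2def
    have hFT2 : FSO3 r ξ ζ ε * (4 * D^2) = 2 * ζ^(-ε) * (ζ^(-4*ε) - 1) * G2 := by
      rw [← hTr2]
      simp only [FSO3, qInt]
      rw [← hDdef, hfo, Finset.sum_image hinj, Finset.mul_sum, Finset.sum_mul]
      apply Finset.sum_congr rfl
      intro j _
      have hcast : ((2*j+1 : ℕ) : ℤ) = 2*(j:ℤ)+1 := by push_cast; ring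
      have hdiv : ((((2*j+1:ℕ):ℤ))^2 - 1) / 4 = (j:ℤ)^2 + j := by
        rw [hcast, show (2*(j:ℤ)+1)^2 - 1 = ((j:ℤ)^2 + (j:ℤ)) * 4 by ring]
        exact Int.mul_ediv_cancel _ (by norm_num)
      have hXi : ξ ^ (ε * (((((2*j+1:ℕ):ℤ))^2 - 1) / 4)) = ζ ^ (ε * ((2*(j:ℤ)+1)^2 - 1)) := by
        rw [hdiv, ← hζ4, ← zpow_mul]
        congr 1
        ring
      rw [hXi, hcast]
      rw [show (1:ℂ)/4 * (ζ ^ (ε * ((2*(j:ℤ)+1)^2 - 1)) *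
          ((ζ^(2*(2*(j:ℤ)+1)) - ζ^(-(2*(2*(j:ℤ)+1))))/D)^2) * (4*D^2)
          = ζ ^ (ε * ((2*(j:ℤ)+1)^2-1)) * (ζ^(2*(2*(j:ℤ)+1)) - ζ^(-(2*(2*(j:ℤ)+1))))^2 *
            (D^2/D^2) by rw [div_pow]; ring, div_self (pow_ne_zero 2 hD), mul_one]
    have hterm2 : ∀ x ∈ (range (2*r)).filter (fun h : ℕ => ζ^(2*2^2*ε*(h:ℤ)) = 1),
        ζ^(ε*2*(x:ℤ)*(2*(x:ℤ)+2*1)) = (1:ℂ) := by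
      intro x hx
      have hpx := (mem_filter.1 hx).2
      have hd8 : (d:ℤ) ∣ 8*(x:ℤ) := by
        rcases hε with rfl | rfl
        · have h1 := (hE1 _).1 hpx
          rwa [show 2*2^2*(1:ℤ)*(x:ℤ) = 8*(x:ℤ) by ring] at h1
        · have h1 := (hE1 _).1 hpx
          rwa [show 2*2^2*(-1:ℤ)*(x:ℤ) = -(8*(x:ℤ)) by ring, dvd_neg] at h1
      have hnat : d ∣ 8*x := by exact_mod_cast hd8
      have hgoal : d ∣ 4*(x*(x+1)) := by
        have hc2 : Nat.Coprime r 2 := hoddr.coprime_two_right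
        rcases horder with ⟨hc, -⟩ | ⟨hc, -⟩ | hc
        · rw [hc] at hnat ⊢
          have hrx : r ∣ x := by
            have h8 : Nat.Coprime r 8 := by
              rw [show (8:ℕ) = 2^3 by norm_num]
              exact hc2.pow_right 3
            exact h8.dvd_of_dvd_mul_left hnat
          obtain ⟨m, rfl⟩ := hrx
          exact ⟨4*(m*(r*m+1)), by ring⟩
        · rw [hc] at hnat ⊢
          obtain ⟨c, hc8⟩ := hnat
          rw [show 8*x = 2*(4*x) by ring, show 2*r*c = 2*(r*c) by ring] at hc8
          have h4x : r ∣ 4*x := ⟨c, Nat.eq_of_mul_eq_mul_left (by norm_num) hc8⟩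
          have hrx : r ∣ x := by
            have h4 : Nat.Coprime r 4 := by
              rw [show (4:ℕ) = 2^2 by norm_num]
              exact hc2.pow_right 2
            exact h4.dvd_of_dvd_mul_left h4x
          obtain ⟨m, rfl⟩ := hrx
          exact ⟨2*(m*(r*m+1)), by ring⟩
        · rw [hc] at hnat ⊢
          obtain ⟨c, hc8⟩ := hnat
          rw [show 8*x = 4*(2*x) by ring, show 4*r*c = 4*(r*c) by ring] at hc8
          have h2x : r ∣ 2*x := ⟨c, Nat.eq_of_mul_eq_mul_left (by norm_num) hc8⟩
          have hrx : r ∣ x := hc2.dvd_of_dvd_mul_left h2x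
          obtain ⟨m, rfl⟩ := hrx
          exact ⟨m*(r*m+1), by ring⟩
      apply hone
      rw [show ε*2*(x:ℤ)*(2*(x:ℤ)+2*1) = ε * ((4*(x*(x+1)) : ℕ) : ℤ) by push_cast; ring]
      exact Dvd.dvd.mul_left (Int.natCast_dvd_natCast.2 hgoal) ε
    have h0mem2 : 0 ∈ (range (2*r)).filter (fun h : ℕ => ζ^(2*2^2*ε*(h:ℤ)) = 1) := by
      rw [mem_filter]
      exact ⟨mem_range.2 (by omega), by norm_num⟩
    have hG2 : G2 ≠ 0 := by
      intro h0
      rw [h0, zero_mul] at hPr2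
      have hsum : ∑ x ∈ (range (2*r)).filter (fun h : ℕ => ζ^(2*2^2*ε*(h:ℤ)) = 1),
          ζ^(ε*2*(x:ℤ)*(2*(x:ℤ)+2*1)) = 0 := by
        have h2r0 : ((2*r:ℕ):ℂ) ≠ 0 := Nat.cast_ne_zero.2 (by omega)
        exact (mul_eq_zero.1 hPr2.symm).resolve_left h2r0
      rw [Finset.sum_congr rfl hterm2, Finset.sum_const, nsmul_eq_mul, mul_one] at hsum
      exact (Nat.cast_ne_zero.2 (Finset.card_ne_zero_of_mem h0mem2)) hsum
    intro hF0
    rw [hF0, zero_mul] at hFT2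
    exact hG2 ((mul_eq_zero.1 hFT2.symm).resolve_left hc1)
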